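/- Let π₁ and π₂ be compatible Poisson tensors on ℝ^N, both not depending on the variable x_p for some fixed 1 ≤ p ≤ N, and let c be a Casimir function for π₂. Then for every λ ∈ ℝ the 2N×2N matrix field on ℝ^{2N} with blocks Π^{xx}(x,y) = 0, Π^{xy}(x,y) = π₂(x) + c(x)·E_pp, Π^{yx}(x,y) = π₂(x) − c(x)·E_pp, Π^{yy}(x,y) = ∑_{s=1}^N (∂π₂/∂x_s)(x) y_s + λ·π₁(x) is a Poisson tensor on ℝ^{2N} (denoted Π_{TM,λ,c(x)}). -/

import Mathlib

open scoped ContDiff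

/-- Partial derivative `∂f/∂z_s` at `z`, for functions on `ℝ^ι`. -/
noncomputable def pd {ι : Type} [Fintype ι] [DecidableEq ι]
    (s : ι) (f : (ι → ℝ) → ℝ) (x : ι → ℝ) : ℝ :=
  fderiv ℝ f x (Pi.single s 1)

/-- A Poisson tensor on `ℝ^ι`: a smooth antisymmetric matrix field satisfying the
Jacobi condition. -/
def IsPoissonTensor {ι : Type} [Fintype ι] [DecidableEq ι]
    (π : (ι → ℝ) → Matrix ι ι ℝ) : Prop :=
  (∀ i j, ContDiff ℝ ∞ fun x => π x i j) ∧
  (∀ x i j, π x j i = - π x i j) ∧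
  (∀ x i j k, ∑ s, (pd s (fun y => π y i j) x * π x s k
      + pd s (fun y => π y k i) x * π x s j
      + pd s (fun y => π y j k) x * π x s i) = 0)

/-- `c` is a (smooth) Casimir function for `π`. -/
def IsCasimir {ι : Type} [Fintype ι] [DecidableEq ι]
    (π : (ι → ℝ) → Matrix ι ι ℝ) (c : (ι → ℝ) → ℝ) : Prop :=
  ContDiff ℝ ∞ c ∧ ∀ x j, ∑ s, pd s c x * π x s j = 0

/-- The matrix of partial derivatives `(∂π_{ij}/∂x_s)(x)`. -/
noncomputable def pdMat {N : ℕ} (s : Fin N)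
    (π : (Fin N → ℝ) → Matrix (Fin N) (Fin N) ℝ) (x : Fin N → ℝ) :
    Matrix (Fin N) (Fin N) ℝ :=
  Matrix.of fun i j => pd s (fun y => π y i j) x

/-- The `x`-part of a point `z = (x,y) ∈ ℝ^{2N}`. -/
def Xc {N : ℕ} (z : (Fin N ⊕ Fin N) → ℝ) : Fin N → ℝ := fun i => z (Sum.inl i)

/-- The `y`-part of a point `z = (x,y) ∈ ℝ^{2N}`. -/
def Yc {N : ℕ} (z : (Fin N ⊕ Fin N) → ℝ) : Fin N → ℝ := fun i => z (Sum.inr i)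

set_option linter.unusedSectionVars false

section tool
variable {ι : Type} [Fintype ι] [DecidableEq ι] {f g : (ι → ℝ) → ℝ} {x : ι → ℝ} {s t : ι}

lemma cdiff (hf : ContDiff ℝ ∞ f) : DifferentiableAt ℝ f x :=
  (hf.differentiable (by simp)).differentiableAt

lemma pd_add (hf : DifferentiableAt ℝ f x) (hg : DifferentiableAt ℝ g x) :
    pd s (fun y => f y + g y) x = pd s f x + pd s g x := by
  unfold pd; rw [fderiv_fun_add hf hg]; rfl

lemma pd_sub (hf : DifferentiableAt ℝ f x) (hg : DifferentiableAt ℝ g x) :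
    pd s (fun y => f y - g y) x = pd s f x - pd s g x := by
  unfold pd; rw [fderiv_fun_sub hf hg]; rfl

lemma pd_mul (hf : DifferentiableAt ℝ f x) (hg : DifferentiableAt ℝ g x) :
    pd s (fun y => f y * g y) x = pd s f x * g x + f x * pd s g x := by
  unfold pd; rw [fderiv_fun_mul hf hg]
  simp [smul_eq_mul]; ring

lemma pd_const (a : ℝ) : pd s (fun _ => a) x = 0 := by
  unfold pd; rw [fderiv_fun_const]; rfl

lemma pd_neg : pd s (fun y => -(f y)) x = - pd s f x := by
  unfold pd; rw [fderiv_fun_neg]; rfl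

lemma pd_const_mul (a : ℝ) (hf : DifferentiableAt ℝ f x) :
    pd s (fun y => a * f y) x = a * pd s f x := by
  unfold pd; rw [fderiv_const_mul hf]; rfl

lemma pd_sum {κ : Type*} (S : Finset κ) (F : κ → (ι → ℝ) → ℝ)
    (h : ∀ a ∈ S, DifferentiableAt ℝ (F a) x) :
    pd s (fun y => ∑ a ∈ S, F a y) x = ∑ a ∈ S, pd s (F a) x := by
  unfold pd; rw [fderiv_fun_sum h]; rw [ContinuousLinearMap.sum_apply]

lemma contDiff_pd (hf : ContDiff ℝ ∞ f) (s : ι) : ContDiff ℝ ∞ fun x => pd s f x := by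
  have h := hf.fderiv_right (m := ∞) le_rfl
  exact h.clm_apply contDiff_const

lemma pd_pd_comm (hf : ContDiff ℝ ∞ f) :
    pd s (fun w => pd t f w) x = pd t (fun w => pd s f w) x := by
  have hD : DifferentiableAt ℝ (fderiv ℝ f) x :=
    (((hf.fderiv_right (m := ∞) le_rfl)).differentiable (by simp)).differentiableAt
  have key : ∀ v : ι → ℝ, ∀ u : ι, pd u (fun w => fderiv ℝ f w v) x
      = fderiv ℝ (fderiv ℝ f) x (Pi.single u 1) v := by
    intro v u
    have h1 : HasFDerivAt (fun w => fderiv ℝ f w v)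
        ((ContinuousLinearMap.apply ℝ ℝ v).comp (fderiv ℝ (fderiv ℝ f) x)) x :=
      (ContinuousLinearMap.apply ℝ ℝ v).hasFDerivAt.comp x hD.hasFDerivAt
    simpa [pd] using congrArg (fun L => L (Pi.single u 1)) h1.fderiv
  have hsymm := second_derivative_symmetric
    (f' := fderiv ℝ f) (fun y => (cdiff hf (x := y)).hasFDerivAt) hD.hasFDerivAt
    (Pi.single t 1) (Pi.single s 1)
  rw [show (fun w => pd t f w) = (fun w => fderiv ℝ f w (Pi.single t 1)) from rfl,
      show (fun w => pd s f w) = (fun w => fderiv ℝ f w (Pi.single s 1)) from rfl,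
      key, key]
  exact hsymm.symm

end tool

noncomputable def XcL (N : ℕ) : (((Fin N ⊕ Fin N) → ℝ)) →L[ℝ] (Fin N → ℝ) :=
  ContinuousLinearMap.pi fun i => ContinuousLinearMap.proj (Sum.inl i)

section sumspace
variable {N : ℕ} {z : (Fin N ⊕ Fin N) → ℝ} {f : (Fin N → ℝ) → ℝ}

lemma XcL_single_inl (t : Fin N) : XcL N (Pi.single (Sum.inl t) (1:ℝ)) = Pi.single t 1 := by
  funext i; simp [XcL, Pi.single_apply]

lemma XcL_single_inr (t : Fin N) : XcL N (Pi.single (Sum.inr t) (1:ℝ)) = 0 := by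
  funext i; simp [XcL, Pi.single_apply]

lemma fderiv_comp_Xc (hf : DifferentiableAt ℝ f (Xc z)) :
    fderiv ℝ (fun z => f (Xc z)) z = (fderiv ℝ f (Xc z)).comp (XcL N) := by
  have h : HasFDerivAt (f ∘ ⇑(XcL N)) ((fderiv ℝ f (Xc z)).comp (XcL N)) z :=
    (hf.hasFDerivAt).comp z (XcL N).hasFDerivAt
  exact h.fderiv

lemma pd_comp_Xl (hf : DifferentiableAt ℝ f (Xc z)) (t : Fin N) :
    pd (Sum.inl t) (fun z => f (Xc z)) z = pd t f (Xc z) := by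
  unfold pd
  rw [fderiv_comp_Xc hf]
  simp [ContinuousLinearMap.comp_apply, XcL_single_inl]

lemma pd_comp_Xr (hf : DifferentiableAt ℝ f (Xc z)) (t : Fin N) :
    pd (Sum.inr t) (fun z => f (Xc z)) z = 0 := by
  unfold pd
  rw [fderiv_comp_Xc hf]
  simp [ContinuousLinearMap.comp_apply, XcL_single_inr]

lemma pd_Yc (a : Fin N ⊕ Fin N) (s : Fin N) :
    pd a (fun z => Yc z s) z = if Sum.inr s = a then 1 else 0 := by
  have h : (fun z : (Fin N ⊕ Fin N) → ℝ => Yc z s) = ⇑(ContinuousLinearMap.proj (R := ℝ)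
      (φ := fun _ : Fin N ⊕ Fin N => ℝ) (Sum.inr s)) := rfl
  unfold pd
  rw [h, ContinuousLinearMap.fderiv]
  simp [Pi.single_apply]

lemma contDiff_Yc (s : Fin N) : ContDiff ℝ ∞ fun z : (Fin N ⊕ Fin N) → ℝ => Yc z s := by
  have h : (fun z : (Fin N ⊕ Fin N) → ℝ => Yc z s) = ⇑(ContinuousLinearMap.proj (R := ℝ)
      (φ := fun _ : Fin N ⊕ Fin N => ℝ) (Sum.inr s)) := rfl
  rw [h]
  exact (ContinuousLinearMap.proj (R := ℝ) (φ := fun _ : Fin N ⊕ Fin N => ℝ) (Sum.inr s)).contDiff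

lemma contDiff_comp_Xc (hf : ContDiff ℝ ∞ f) :
    ContDiff ℝ ∞ fun z : (Fin N ⊕ Fin N) → ℝ => f (Xc z) :=
  hf.comp (XcL N).contDiff

lemma diffAt_comp_Xc (hf : ContDiff ℝ ∞ f) :
    DifferentiableAt ℝ (fun z : (Fin N ⊕ Fin N) → ℝ => f (Xc z)) z :=
  cdiff (contDiff_comp_Xc hf)

lemma diffAt_Yc (s : Fin N) :
    DifferentiableAt ℝ (fun z : (Fin N ⊕ Fin N) → ℝ => Yc z s) z :=
  cdiff (contDiff_Yc s)

end sumspace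
def ee {N : ℕ} (p i : Fin N) : ℝ := if i = p then 1 else 0

lemma std_eq {N : ℕ} (p i j : Fin N) (a : ℝ) : Matrix.single p p a i j = ee p i * ee p j * a := by
  simp only [Matrix.single, Matrix.of_apply, ee]
  split_ifs <;> simp_all

section TLsec
variable {N : ℕ} (π₁ π₂ : (Fin N → ℝ) → Matrix (Fin N) (Fin N) ℝ) (p : Fin N)
  (c : (Fin N → ℝ) → ℝ) (lam : ℝ)

noncomputable def TL : ((Fin N ⊕ Fin N) → ℝ) → Matrix (Fin N ⊕ Fin N) (Fin N ⊕ Fin N) ℝ :=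
  fun z : (Fin N ⊕ Fin N) → ℝ =>
      Matrix.fromBlocks
        0
        (π₂ (Xc z) + c (Xc z) • Matrix.single p p (1 : ℝ))
        (π₂ (Xc z) - c (Xc z) • Matrix.single p p (1 : ℝ))
        (∑ s, Yc z s • pdMat s π₂ (Xc z) + lam • π₁ (Xc z))

variable {z : (Fin N ⊕ Fin N) → ℝ} (i j : Fin N)

lemma TL_ll : TL π₁ π₂ p c lam z (Sum.inl i) (Sum.inl j) = 0 := by
  simp [TL]

lemma TL_lr : TL π₁ π₂ p c lam z (Sum.inl i) (Sum.inr j)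
    = π₂ (Xc z) i j + ee p i * ee p j * c (Xc z) := by
  simp [TL, std_eq]

lemma TL_rl : TL π₁ π₂ p c lam z (Sum.inr i) (Sum.inl j)
    = π₂ (Xc z) i j - ee p i * ee p j * c (Xc z) := by
  simp [TL, std_eq]

lemma TL_rr : TL π₁ π₂ p c lam z (Sum.inr i) (Sum.inr j)
    = ∑ s, Yc z s * pd s (fun w => π₂ w i j) (Xc z) + lam * π₁ (Xc z) i j := by
  simp only [TL, Matrix.fromBlocks_apply₂₂, Matrix.add_apply, Matrix.smul_apply,
    Matrix.sum_apply, Matrix.of_apply, Pi.smul_apply, smul_eq_mul, pdMat]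

end TLsec
section pdTLsec
variable {N : ℕ} {π₁ π₂ : (Fin N → ℝ) → Matrix (Fin N) (Fin N) ℝ} {p : Fin N}
  {c : (Fin N → ℝ) → ℝ} {lam : ℝ} {z : (Fin N ⊕ Fin N) → ℝ}
  (hs1 : ∀ i j, ContDiff ℝ ∞ fun x => π₁ x i j)
  (hs2 : ∀ i j, ContDiff ℝ ∞ fun x => π₂ x i j)
  (hsc : ContDiff ℝ ∞ c)
  (i j : Fin N)

lemma pdTL_ll (a : Fin N ⊕ Fin N) :
    pd a (fun z => TL π₁ π₂ p c lam z (Sum.inl i) (Sum.inl j)) z = 0 := by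
  rw [show (fun z => TL π₁ π₂ p c lam z (Sum.inl i) (Sum.inl j)) = fun _ => (0:ℝ) from
    funext fun z => TL_ll π₁ π₂ p c lam i j]
  exact pd_const 0

include hs2 hsc in
lemma pdTL_l_lr (t : Fin N) :
    pd (Sum.inl t) (fun z => TL π₁ π₂ p c lam z (Sum.inl i) (Sum.inr j)) z
    = pd t (fun w => π₂ w i j) (Xc z) + ee p i * ee p j * pd t c (Xc z) := by
  have h1 : pd (Sum.inl t) (fun z => TL π₁ π₂ p c lam z (Sum.inl i) (Sum.inr j)) z
      = pd t (fun w => π₂ w i j + ee p i * ee p j * c w) (Xc z) := by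
    rw [show (fun z => TL π₁ π₂ p c lam z (Sum.inl i) (Sum.inr j))
        = fun z : (Fin N ⊕ Fin N) → ℝ => (fun w => π₂ w i j + ee p i * ee p j * c w) (Xc z) from
      funext fun z => TL_lr π₁ π₂ p c lam i j]
    exact pd_comp_Xl (f := fun w => π₂ w i j + ee p i * ee p j * c w)
      (cdiff ((hs2 i j).add (contDiff_const.mul hsc))) t
  rw [h1, pd_add (cdiff (hs2 i j)) (cdiff (contDiff_const.mul hsc)),
    pd_const_mul _ (cdiff hsc)]

include hs2 hsc in
lemma pdTL_r_lr (t : Fin N) :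
    pd (Sum.inr t) (fun z => TL π₁ π₂ p c lam z (Sum.inl i) (Sum.inr j)) z = 0 := by
  rw [show (fun z => TL π₁ π₂ p c lam z (Sum.inl i) (Sum.inr j))
      = fun z : (Fin N ⊕ Fin N) → ℝ => (fun w => π₂ w i j + ee p i * ee p j * c w) (Xc z) from
    funext fun z => TL_lr π₁ π₂ p c lam i j]
  exact pd_comp_Xr (f := fun w => π₂ w i j + ee p i * ee p j * c w)
    (cdiff ((hs2 i j).add (contDiff_const.mul hsc))) t

include hs2 hsc in
lemma pdTL_l_rl (t : Fin N) :
    pd (Sum.inl t) (fun z => TL π₁ π₂ p c lam z (Sum.inr i) (Sum.inl j)) z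
    = pd t (fun w => π₂ w i j) (Xc z) - ee p i * ee p j * pd t c (Xc z) := by
  have h1 : pd (Sum.inl t) (fun z => TL π₁ π₂ p c lam z (Sum.inr i) (Sum.inl j)) z
      = pd t (fun w => π₂ w i j - ee p i * ee p j * c w) (Xc z) := by
    rw [show (fun z => TL π₁ π₂ p c lam z (Sum.inr i) (Sum.inl j))
        = fun z : (Fin N ⊕ Fin N) → ℝ => (fun w => π₂ w i j - ee p i * ee p j * c w) (Xc z) from
      funext fun z => TL_rl π₁ π₂ p c lam i j]
    exact pd_comp_Xl (f := fun w => π₂ w i j - ee p i * ee p j * c w)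
      (cdiff ((hs2 i j).sub (contDiff_const.mul hsc))) t
  rw [h1, pd_sub (cdiff (hs2 i j)) (cdiff (contDiff_const.mul hsc)),
    pd_const_mul _ (cdiff hsc)]

include hs2 hsc in
lemma pdTL_r_rl (t : Fin N) :
    pd (Sum.inr t) (fun z => TL π₁ π₂ p c lam z (Sum.inr i) (Sum.inl j)) z = 0 := by
  rw [show (fun z => TL π₁ π₂ p c lam z (Sum.inr i) (Sum.inl j))
      = fun z : (Fin N ⊕ Fin N) → ℝ => (fun w => π₂ w i j - ee p i * ee p j * c w) (Xc z) from
    funext fun z => TL_rl π₁ π₂ p c lam i j]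
  exact pd_comp_Xr (f := fun w => π₂ w i j - ee p i * ee p j * c w)
    (cdiff ((hs2 i j).sub (contDiff_const.mul hsc))) t

include hs1 hs2 in
lemma pdTL_l_rr (t : Fin N) :
    pd (Sum.inl t) (fun z => TL π₁ π₂ p c lam z (Sum.inr i) (Sum.inr j)) z
    = (∑ s, Yc z s * pd t (fun w => pd s (fun v => π₂ v i j) w) (Xc z))
      + lam * pd t (fun w => π₁ w i j) (Xc z) := by
  have hA : DifferentiableAt ℝ
      (fun z : (Fin N ⊕ Fin N) → ℝ => ∑ s, Yc z s * pd s (fun v => π₂ v i j) (Xc z)) z :=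
    DifferentiableAt.fun_sum fun s _ =>
      (diffAt_Yc s).mul (diffAt_comp_Xc (contDiff_pd (hs2 i j) s))
  have hB : DifferentiableAt ℝ (fun z : (Fin N ⊕ Fin N) → ℝ => lam * π₁ (Xc z) i j) z :=
    (diffAt_comp_Xc (hs1 i j)).const_mul lam
  rw [show (fun z => TL π₁ π₂ p c lam z (Sum.inr i) (Sum.inr j))
      = fun z : (Fin N ⊕ Fin N) → ℝ =>
        (∑ s, Yc z s * pd s (fun v => π₂ v i j) (Xc z)) + lam * π₁ (Xc z) i j from
    funext fun z => TL_rr π₁ π₂ p c lam i j]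
  rw [pd_add hA hB,
    pd_sum Finset.univ (fun s => fun z : (Fin N ⊕ Fin N) → ℝ =>
        Yc z s * pd s (fun v => π₂ v i j) (Xc z))
      (fun s _ => (diffAt_Yc s).mul (diffAt_comp_Xc (contDiff_pd (hs2 i j) s)))]
  have hC : pd (Sum.inl t) (fun z : (Fin N ⊕ Fin N) → ℝ => lam * π₁ (Xc z) i j) z
      = lam * pd t (fun w => π₁ w i j) (Xc z) := by
    rw [pd_const_mul lam (diffAt_comp_Xc (hs1 i j))]
    congr 1
    exact pd_comp_Xl (f := fun w => π₁ w i j) (cdiff (hs1 i j)) t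
  rw [hC]
  congr 1
  refine Finset.sum_congr rfl fun s _ => ?_
  rw [pd_mul (diffAt_Yc s) (diffAt_comp_Xc (contDiff_pd (hs2 i j) s)), pd_Yc]
  have hD : pd (Sum.inl t)
      (fun z : (Fin N ⊕ Fin N) → ℝ => pd s (fun v => π₂ v i j) (Xc z)) z
      = pd t (fun w => pd s (fun v => π₂ v i j) w) (Xc z) :=
    pd_comp_Xl (f := fun w => pd s (fun v => π₂ v i j) w) (cdiff (contDiff_pd (hs2 i j) s)) t
  rw [hD]
  simp

include hs1 hs2 in
lemma pdTL_r_rr (t : Fin N) :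
    pd (Sum.inr t) (fun z => TL π₁ π₂ p c lam z (Sum.inr i) (Sum.inr j)) z
    = pd t (fun w => π₂ w i j) (Xc z) := by
  have hA : DifferentiableAt ℝ
      (fun z : (Fin N ⊕ Fin N) → ℝ => ∑ s, Yc z s * pd s (fun v => π₂ v i j) (Xc z)) z :=
    DifferentiableAt.fun_sum fun s _ =>
      (diffAt_Yc s).mul (diffAt_comp_Xc (contDiff_pd (hs2 i j) s))
  have hB : DifferentiableAt ℝ (fun z : (Fin N ⊕ Fin N) → ℝ => lam * π₁ (Xc z) i j) z :=
    (diffAt_comp_Xc (hs1 i j)).const_mul lam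
  rw [show (fun z => TL π₁ π₂ p c lam z (Sum.inr i) (Sum.inr j))
      = fun z : (Fin N ⊕ Fin N) → ℝ =>
        (∑ s, Yc z s * pd s (fun v => π₂ v i j) (Xc z)) + lam * π₁ (Xc z) i j from
    funext fun z => TL_rr π₁ π₂ p c lam i j]
  rw [pd_add hA hB,
    pd_sum Finset.univ (fun s => fun z : (Fin N ⊕ Fin N) → ℝ =>
        Yc z s * pd s (fun v => π₂ v i j) (Xc z))
      (fun s _ => (diffAt_Yc s).mul (diffAt_comp_Xc (contDiff_pd (hs2 i j) s)))]
  have hC : pd (Sum.inr t) (fun z : (Fin N ⊕ Fin N) → ℝ => lam * π₁ (Xc z) i j) z = 0 := by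
    rw [pd_const_mul lam (diffAt_comp_Xc (hs1 i j))]
    rw [pd_comp_Xr (f := fun w => π₁ w i j) (cdiff (hs1 i j)) t, mul_zero]
  rw [hC, add_zero]
  have hE : ∀ s : Fin N, pd (Sum.inr t) (fun z : (Fin N ⊕ Fin N) → ℝ =>
      Yc z s * pd s (fun v => π₂ v i j) (Xc z)) z
      = (if s = t then (1:ℝ) else 0) * pd s (fun v => π₂ v i j) (Xc z) := by
    intro s
    rw [pd_mul (diffAt_Yc s) (diffAt_comp_Xc (contDiff_pd (hs2 i j) s)), pd_Yc]
    have hD : pd (Sum.inr t)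
        (fun z : (Fin N ⊕ Fin N) → ℝ => pd s (fun v => π₂ v i j) (Xc z)) z = 0 :=
      pd_comp_Xr (f := fun w => pd s (fun v => π₂ v i j) w) (cdiff (contDiff_pd (hs2 i j) s)) t
    rw [hD]
    simp [Sum.inr.injEq]
  rw [Finset.sum_congr rfl fun s _ => hE s]
  simp

end pdTLsec
section factsec
variable {ι : Type} [Fintype ι] [DecidableEq ι] {x : ι → ℝ} {s : ι}

lemma pd_jac {A B C D E F : (ι → ℝ) → ℝ}
    (hA : DifferentiableAt ℝ A x) (hB : DifferentiableAt ℝ B x)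
    (hC : DifferentiableAt ℝ C x) (hD : DifferentiableAt ℝ D x)
    (hE : DifferentiableAt ℝ E x) (hF : DifferentiableAt ℝ F x) :
    pd s (fun y => A y * B y + C y * D y + E y * F y) x
    = (pd s A x * B x + A x * pd s B x) + (pd s C x * D x + C x * pd s D x)
      + (pd s E x * F x + E x * pd s F x) := by
  rw [pd_add ((hA.fun_mul hB).fun_add (hC.fun_mul hD)) (hE.fun_mul hF), pd_add (hA.fun_mul hB) (hC.fun_mul hD),
    pd_mul hA hB, pd_mul hC hD, pd_mul hE hF]

end factsec

section facts2
variable {N : ℕ} {π₁ π₂ : (Fin N → ℝ) → Matrix (Fin N) (Fin N) ℝ} {p : Fin N}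
  (hs1 : ∀ i j, ContDiff ℝ ∞ fun x => π₁ x i j)
  (hs2 : ∀ i j, ContDiff ℝ ∞ fun x => π₂ x i j)

include hs2 in
lemma factQQp (hp₂ : ∀ x i j, pd p (fun y => π₂ y i j) x = 0)
    (x : Fin N → ℝ) (s : Fin N) (a b : Fin N) :
    pd p (fun w => pd s (fun v => π₂ v a b) w) x = 0 := by
  rw [pd_pd_comm (hs2 a b)]
  rw [show (fun w => pd p (fun v => π₂ v a b) w) = fun _ => (0:ℝ) from
    funext fun w => hp₂ w a b]
  exact pd_const 0

include hs1 hs2 in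
lemma factF2 (hπ₁ : IsPoissonTensor π₁) (hπ₂ : IsPoissonTensor π₂)
    (hcomp : IsPoissonTensor (fun x => π₁ x + π₂ x))
    (x : Fin N → ℝ) (a b cc : Fin N) :
    ∑ t, (pd t (fun w => π₁ w a b) x * π₂ x t cc + pd t (fun w => π₂ w a b) x * π₁ x t cc
      + (pd t (fun w => π₁ w cc a) x * π₂ x t b + pd t (fun w => π₂ w cc a) x * π₁ x t b)
      + (pd t (fun w => π₁ w b cc) x * π₂ x t a + pd t (fun w => π₂ w b cc) x * π₁ x t a))
      = 0 := by
  have hsum : ∀ (t : Fin N) (a b : Fin N),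
      pd t (fun y => π₁ y a b + π₂ y a b) x
      = pd t (fun y => π₁ y a b) x + pd t (fun y => π₂ y a b) x :=
    fun t a b => pd_add (cdiff (hs1 a b)) (cdiff (hs2 a b))
  have key : (∑ t, (pd t (fun y => π₁ y a b) x * π₁ x t cc
        + pd t (fun y => π₁ y cc a) x * π₁ x t b
        + pd t (fun y => π₁ y b cc) x * π₁ x t a))
      + (∑ t, (pd t (fun y => π₂ y a b) x * π₂ x t cc
        + pd t (fun y => π₂ y cc a) x * π₂ x t b
        + pd t (fun y => π₂ y b cc) x * π₂ x t a))
      + (∑ t, (pd t (fun w => π₁ w a b) x * π₂ x t cc + pd t (fun w => π₂ w a b) x * π₁ x t cc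
      + (pd t (fun w => π₁ w cc a) x * π₂ x t b + pd t (fun w => π₂ w cc a) x * π₁ x t b)
      + (pd t (fun w => π₁ w b cc) x * π₂ x t a + pd t (fun w => π₂ w b cc) x * π₁ x t a)))
      = 0 := by
    rw [← Finset.sum_add_distrib, ← Finset.sum_add_distrib]
    refine Eq.trans (Finset.sum_congr rfl fun t _ => ?_) (hcomp.2.2 x a b cc)
    show _ = pd t (fun y => π₁ y a b + π₂ y a b) x * (π₁ x t cc + π₂ x t cc)
      + pd t (fun y => π₁ y cc a + π₂ y cc a) x * (π₁ x t b + π₂ x t b)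
      + pd t (fun y => π₁ y b cc + π₂ y b cc) x * (π₁ x t a + π₂ x t a)
    rw [hsum t a b, hsum t cc a, hsum t b cc]
    ring
  have h1 := hπ₁.2.2 x a b cc
  have h2 := hπ₂.2.2 x a b cc
  linarith [key, h1, h2]

include hs2 in
lemma factF6 (hπ₂ : IsPoissonTensor π₂) (x : Fin N → ℝ) (u : Fin N) (a b cc : Fin N) :
    ∑ t, ((pd u (fun w => pd t (fun v => π₂ v a b) w) x * π₂ x t cc
        + pd t (fun v => π₂ v a b) x * pd u (fun w => π₂ w t cc) x)
      + (pd u (fun w => pd t (fun v => π₂ v cc a) w) x * π₂ x t b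
        + pd t (fun v => π₂ v cc a) x * pd u (fun w => π₂ w t b) x)
      + (pd u (fun w => pd t (fun v => π₂ v b cc) w) x * π₂ x t a
        + pd t (fun v => π₂ v b cc) x * pd u (fun w => π₂ w t a) x)) = 0 := by
  have hz : (fun w => ∑ t, (pd t (fun v => π₂ v a b) w * π₂ w t cc
      + pd t (fun v => π₂ v cc a) w * π₂ w t b
      + pd t (fun v => π₂ v b cc) w * π₂ w t a)) = fun _ => (0:ℝ) :=
    funext fun w => hπ₂.2.2 w a b cc
  have h1 : pd u (fun w => ∑ t, (pd t (fun v => π₂ v a b) w * π₂ w t cc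
      + pd t (fun v => π₂ v cc a) w * π₂ w t b
      + pd t (fun v => π₂ v b cc) w * π₂ w t a)) x = 0 := by
    rw [hz]; exact pd_const 0
  rw [pd_sum Finset.univ (fun t => fun w => pd t (fun v => π₂ v a b) w * π₂ w t cc
      + pd t (fun v => π₂ v cc a) w * π₂ w t b
      + pd t (fun v => π₂ v b cc) w * π₂ w t a)
    (fun t _ => (((cdiff (contDiff_pd (hs2 a b) t)).mul (cdiff (hs2 t cc))).add
      ((cdiff (contDiff_pd (hs2 cc a) t)).mul (cdiff (hs2 t b)))).add
      ((cdiff (contDiff_pd (hs2 b cc) t)).mul (cdiff (hs2 t a))))] at h1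
  refine Eq.trans (Finset.sum_congr rfl fun t _ => ?_) h1
  exact (pd_jac (cdiff (contDiff_pd (hs2 a b) t)) (cdiff (hs2 t cc))
    (cdiff (contDiff_pd (hs2 cc a) t)) (cdiff (hs2 t b))
    (cdiff (contDiff_pd (hs2 b cc) t)) (cdiff (hs2 t a))).symm

end facts2
theorem TL_poisson {N : ℕ}
    (π₁ π₂ : (Fin N → ℝ) → Matrix (Fin N) (Fin N) ℝ)
    (hπ₁ : IsPoissonTensor π₁) (hπ₂ : IsPoissonTensor π₂)
    (hcomp : IsPoissonTensor (fun x => π₁ x + π₂ x))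
    (p : Fin N)
    (hp₁ : ∀ x i j, pd p (fun y => π₁ y i j) x = 0)
    (hp₂ : ∀ x i j, pd p (fun y => π₂ y i j) x = 0)
    (c : (Fin N → ℝ) → ℝ) (hc : IsCasimir π₂ c)
    (lam : ℝ) :
    IsPoissonTensor (TL π₁ π₂ p c lam) := by
  have hs1 := hπ₁.1
  have ha1 := hπ₁.2.1
  have hj1 := hπ₁.2.2
  have hs2 := hπ₂.1
  have ha2 := hπ₂.2.1
  have hj2 := hπ₂.2.2
  have hsc := hc.1
  have hcas := hc.2
  have hQskew : ∀ (s : Fin N) (x : Fin N → ℝ) (a b : Fin N),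
      pd s (fun w => π₂ w b a) x = - pd s (fun w => π₂ w a b) x := by
    intro s x a b
    rw [show (fun w => π₂ w b a) = fun w => -(π₂ w a b) from funext fun w => ha2 w a b]
    exact pd_neg
  refine ⟨?_, ?_, ?_⟩
  · -- smoothness
    rintro (i | i) (j | j)
    · rw [show (fun z => TL π₁ π₂ p c lam z (Sum.inl i) (Sum.inl j)) = fun _ => (0:ℝ) from
        funext fun z => TL_ll π₁ π₂ p c lam i j]
      exact contDiff_const
    · rw [show (fun z => TL π₁ π₂ p c lam z (Sum.inl i) (Sum.inr j))
          = fun z : (Fin N ⊕ Fin N) → ℝ => π₂ (Xc z) i j + ee p i * ee p j * c (Xc z) from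
        funext fun z => TL_lr π₁ π₂ p c lam i j]
      exact (contDiff_comp_Xc (hs2 i j)).add (contDiff_const.mul (contDiff_comp_Xc hsc))
    · rw [show (fun z => TL π₁ π₂ p c lam z (Sum.inr i) (Sum.inl j))
          = fun z : (Fin N ⊕ Fin N) → ℝ => π₂ (Xc z) i j - ee p i * ee p j * c (Xc z) from
        funext fun z => TL_rl π₁ π₂ p c lam i j]
      exact (contDiff_comp_Xc (hs2 i j)).sub (contDiff_const.mul (contDiff_comp_Xc hsc))
    · rw [show (fun z => TL π₁ π₂ p c lam z (Sum.inr i) (Sum.inr j))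
          = fun z : (Fin N ⊕ Fin N) → ℝ =>
            (∑ s, Yc z s * pd s (fun v => π₂ v i j) (Xc z)) + lam * π₁ (Xc z) i j from
        funext fun z => TL_rr π₁ π₂ p c lam i j]
      exact (ContDiff.sum fun s _ => (contDiff_Yc s).mul
          (contDiff_comp_Xc (contDiff_pd (hs2 i j) s))).add
        (contDiff_const.mul (contDiff_comp_Xc (hs1 i j)))
  · -- antisymmetry
    rintro z (i | i) (j | j)
    · rw [TL_ll, TL_ll]; ring
    · rw [TL_lr, TL_rl, ha2 (Xc z) j i]; ring
    · rw [TL_rl, TL_lr, ha2 (Xc z) j i]; ring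
    · have hsum : (∑ s, Yc z s * pd s (fun w => π₂ w j i) (Xc z))
          = -∑ s, Yc z s * pd s (fun w => π₂ w i j) (Xc z) := by
        rw [← Finset.sum_neg_distrib]
        refine Finset.sum_congr rfl fun s _ => ?_
        rw [hQskew s (Xc z) i j]; ring
      rw [TL_rr, TL_rr, ha1 (Xc z) i j, hsum]; ring
  · -- Jacobi
    intro z i j k
    have hrot : ∀ i j k : Fin N ⊕ Fin N,
        (∑ s, (pd s (fun y => TL π₁ π₂ p c lam y i j) z * TL π₁ π₂ p c lam z s k
          + pd s (fun y => TL π₁ π₂ p c lam y k i) z * TL π₁ π₂ p c lam z s j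
          + pd s (fun y => TL π₁ π₂ p c lam y j k) z * TL π₁ π₂ p c lam z s i))
        = ∑ s, (pd s (fun y => TL π₁ π₂ p c lam y j k) z * TL π₁ π₂ p c lam z s i
          + pd s (fun y => TL π₁ π₂ p c lam y i j) z * TL π₁ π₂ p c lam z s k
          + pd s (fun y => TL π₁ π₂ p c lam y k i) z * TL π₁ π₂ p c lam z s j) :=
      fun i j k => Finset.sum_congr rfl fun s _ => by ring
    have hllr : ∀ a b d : Fin N,
        (∑ s, (pd s (fun y => TL π₁ π₂ p c lam y (Sum.inl a) (Sum.inl b)) z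
            * TL π₁ π₂ p c lam z s (Sum.inr d)
          + pd s (fun y => TL π₁ π₂ p c lam y (Sum.inr d) (Sum.inl a)) z
            * TL π₁ π₂ p c lam z s (Sum.inl b)
          + pd s (fun y => TL π₁ π₂ p c lam y (Sum.inl b) (Sum.inr d)) z
            * TL π₁ π₂ p c lam z s (Sum.inl a))) = 0 := by
      intro a b d
      refine Finset.sum_eq_zero fun s _ => ?_
      rcases s with t | t
      · rw [pdTL_ll a b (Sum.inl t), TL_ll π₁ π₂ p c lam t b, TL_ll π₁ π₂ p c lam t a]
        ring
      · rw [pdTL_ll a b (Sum.inr t), pdTL_r_rl hs2 hsc d a t, pdTL_r_lr hs2 hsc b d t]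
        ring
    have hlll : ∀ a b d : Fin N,
        (∑ s, (pd s (fun y => TL π₁ π₂ p c lam y (Sum.inl a) (Sum.inl b)) z
            * TL π₁ π₂ p c lam z s (Sum.inl d)
          + pd s (fun y => TL π₁ π₂ p c lam y (Sum.inl d) (Sum.inl a)) z
            * TL π₁ π₂ p c lam z s (Sum.inl b)
          + pd s (fun y => TL π₁ π₂ p c lam y (Sum.inl b) (Sum.inl d)) z
            * TL π₁ π₂ p c lam z s (Sum.inl a))) = 0 := by
      intro a b d
      refine Finset.sum_eq_zero fun s _ => ?_
      rw [pdTL_ll a b s, pdTL_ll d a s, pdTL_ll b d s]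
      ring
    have hlrr : ∀ a b d : Fin N,
        (∑ s, (pd s (fun y => TL π₁ π₂ p c lam y (Sum.inl a) (Sum.inr b)) z
            * TL π₁ π₂ p c lam z s (Sum.inr d)
          + pd s (fun y => TL π₁ π₂ p c lam y (Sum.inr d) (Sum.inl a)) z
            * TL π₁ π₂ p c lam z s (Sum.inr b)
          + pd s (fun y => TL π₁ π₂ p c lam y (Sum.inr b) (Sum.inr d)) z
            * TL π₁ π₂ p c lam z s (Sum.inl a))) = 0 := by
      intro a b d
      rw [Fintype.sum_sum_type]
      have S1 : ∑ t : Fin N,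
          (pd (Sum.inl t) (fun y => TL π₁ π₂ p c lam y (Sum.inl a) (Sum.inr b)) z
            * TL π₁ π₂ p c lam z (Sum.inl t) (Sum.inr d)
          + pd (Sum.inl t) (fun y => TL π₁ π₂ p c lam y (Sum.inr d) (Sum.inl a)) z
            * TL π₁ π₂ p c lam z (Sum.inl t) (Sum.inr b)
          + pd (Sum.inl t) (fun y => TL π₁ π₂ p c lam y (Sum.inr b) (Sum.inr d)) z
            * TL π₁ π₂ p c lam z (Sum.inl t) (Sum.inl a))
          = ∑ t : Fin N,
          ((pd t (fun w => π₂ w a b) (Xc z) + ee p a * ee p b * pd t c (Xc z))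
              * (π₂ (Xc z) t d + ee p t * ee p d * c (Xc z))
            + (pd t (fun w => π₂ w d a) (Xc z) - ee p d * ee p a * pd t c (Xc z))
              * (π₂ (Xc z) t b + ee p t * ee p b * c (Xc z))) :=
        Finset.sum_congr rfl fun t _ => by
          rw [pdTL_l_lr hs2 hsc a b t, pdTL_l_rl hs2 hsc d a t, TL_lr π₁ π₂ p c lam t d,
            TL_lr π₁ π₂ p c lam t b, TL_ll π₁ π₂ p c lam t a]
          ring
      have S2 : ∑ t : Fin N,
          (pd (Sum.inr t) (fun y => TL π₁ π₂ p c lam y (Sum.inl a) (Sum.inr b)) z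
            * TL π₁ π₂ p c lam z (Sum.inr t) (Sum.inr d)
          + pd (Sum.inr t) (fun y => TL π₁ π₂ p c lam y (Sum.inr d) (Sum.inl a)) z
            * TL π₁ π₂ p c lam z (Sum.inr t) (Sum.inr b)
          + pd (Sum.inr t) (fun y => TL π₁ π₂ p c lam y (Sum.inr b) (Sum.inr d)) z
            * TL π₁ π₂ p c lam z (Sum.inr t) (Sum.inl a))
          = ∑ t : Fin N,
          (pd t (fun w => π₂ w b d) (Xc z)
            * (π₂ (Xc z) t a - ee p t * ee p a * c (Xc z))) :=
        Finset.sum_congr rfl fun t _ => by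
          rw [pdTL_r_lr hs2 hsc a b t, pdTL_r_rl hs2 hsc d a t,
            pdTL_r_rr hs1 hs2 b d t, TL_rl π₁ π₂ p c lam t a]
          ring
      rw [S1, S2, ← Finset.sum_add_distrib]
      have E3 : ∀ t : Fin N,
          (((pd t (fun w => π₂ w a b) (Xc z) + ee p a * ee p b * pd t c (Xc z))
              * (π₂ (Xc z) t d + ee p t * ee p d * c (Xc z))
            + (pd t (fun w => π₂ w d a) (Xc z) - ee p d * ee p a * pd t c (Xc z))
              * (π₂ (Xc z) t b + ee p t * ee p b * c (Xc z)))
          + pd t (fun w => π₂ w b d) (Xc z)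
            * (π₂ (Xc z) t a - ee p t * ee p a * c (Xc z)))
          = (pd t (fun y => π₂ y a b) (Xc z) * π₂ (Xc z) t d
              + pd t (fun y => π₂ y d a) (Xc z) * π₂ (Xc z) t b
              + pd t (fun y => π₂ y b d) (Xc z) * π₂ (Xc z) t a)
            + ee p a * ee p b * (pd t c (Xc z) * π₂ (Xc z) t d)
            - ee p d * ee p a * (pd t c (Xc z) * π₂ (Xc z) t b)
            + (if t = p then c (Xc z) * (ee p d * pd t (fun w => π₂ w a b) (Xc z)
                + ee p b * pd t (fun w => π₂ w d a) (Xc z)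
                - ee p a * pd t (fun w => π₂ w b d) (Xc z)) else 0) := by
        intro t
        by_cases ht : t = p
        · rw [ht, if_pos rfl, show ee p p = (1:ℝ) from if_pos rfl,
            hp₂ (Xc z) a b, hp₂ (Xc z) d a, hp₂ (Xc z) b d]
          ring
        · rw [if_neg ht, show ee p t = 0 from if_neg ht]
          ring
      rw [Finset.sum_congr rfl fun t _ => E3 t, Finset.sum_add_distrib,
        Finset.sum_sub_distrib, Finset.sum_add_distrib, ← Finset.mul_sum, ← Finset.mul_sum,
        hj2 (Xc z) a b d, hcas (Xc z) d, hcas (Xc z) b,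
        Finset.sum_ite_eq' Finset.univ p]
      simp [hp₂]
    have hrrr : ∀ a b d : Fin N,
        (∑ s, (pd s (fun y => TL π₁ π₂ p c lam y (Sum.inr a) (Sum.inr b)) z
            * TL π₁ π₂ p c lam z s (Sum.inr d)
          + pd s (fun y => TL π₁ π₂ p c lam y (Sum.inr d) (Sum.inr a)) z
            * TL π₁ π₂ p c lam z s (Sum.inr b)
          + pd s (fun y => TL π₁ π₂ p c lam y (Sum.inr b) (Sum.inr d)) z
            * TL π₁ π₂ p c lam z s (Sum.inr a))) = 0 := by
      intro a b d
      rw [Fintype.sum_sum_type]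
      have S1 : ∑ t : Fin N,
          (pd (Sum.inl t) (fun y => TL π₁ π₂ p c lam y (Sum.inr a) (Sum.inr b)) z
            * TL π₁ π₂ p c lam z (Sum.inl t) (Sum.inr d)
          + pd (Sum.inl t) (fun y => TL π₁ π₂ p c lam y (Sum.inr d) (Sum.inr a)) z
            * TL π₁ π₂ p c lam z (Sum.inl t) (Sum.inr b)
          + pd (Sum.inl t) (fun y => TL π₁ π₂ p c lam y (Sum.inr b) (Sum.inr d)) z
            * TL π₁ π₂ p c lam z (Sum.inl t) (Sum.inr a))
          = ∑ t : Fin N,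
          (((∑ s, Yc z s * pd t (fun w => pd s (fun v => π₂ v a b) w) (Xc z))
              + lam * pd t (fun w => π₁ w a b) (Xc z))
              * (π₂ (Xc z) t d + ee p t * ee p d * c (Xc z))
            + ((∑ s, Yc z s * pd t (fun w => pd s (fun v => π₂ v d a) w) (Xc z))
              + lam * pd t (fun w => π₁ w d a) (Xc z))
              * (π₂ (Xc z) t b + ee p t * ee p b * c (Xc z))
            + ((∑ s, Yc z s * pd t (fun w => pd s (fun v => π₂ v b d) w) (Xc z))
              + lam * pd t (fun w => π₁ w b d) (Xc z))
              * (π₂ (Xc z) t a + ee p t * ee p a * c (Xc z))) :=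
        Finset.sum_congr rfl fun t _ => by
          rw [pdTL_l_rr hs1 hs2 a b t, pdTL_l_rr hs1 hs2 d a t, pdTL_l_rr hs1 hs2 b d t,
            TL_lr π₁ π₂ p c lam t d, TL_lr π₁ π₂ p c lam t b, TL_lr π₁ π₂ p c lam t a]
      have S2 : ∑ t : Fin N,
          (pd (Sum.inr t) (fun y => TL π₁ π₂ p c lam y (Sum.inr a) (Sum.inr b)) z
            * TL π₁ π₂ p c lam z (Sum.inr t) (Sum.inr d)
          + pd (Sum.inr t) (fun y => TL π₁ π₂ p c lam y (Sum.inr d) (Sum.inr a)) z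
            * TL π₁ π₂ p c lam z (Sum.inr t) (Sum.inr b)
          + pd (Sum.inr t) (fun y => TL π₁ π₂ p c lam y (Sum.inr b) (Sum.inr d)) z
            * TL π₁ π₂ p c lam z (Sum.inr t) (Sum.inr a))
          = ∑ t : Fin N,
          (pd t (fun w => π₂ w a b) (Xc z)
              * ((∑ s, Yc z s * pd s (fun w => π₂ w t d) (Xc z)) + lam * π₁ (Xc z) t d)
            + pd t (fun w => π₂ w d a) (Xc z)
              * ((∑ s, Yc z s * pd s (fun w => π₂ w t b) (Xc z)) + lam * π₁ (Xc z) t b)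
            + pd t (fun w => π₂ w b d) (Xc z)
              * ((∑ s, Yc z s * pd s (fun w => π₂ w t a) (Xc z)) + lam * π₁ (Xc z) t a)) :=
        Finset.sum_congr rfl fun t _ => by
          rw [pdTL_r_rr hs1 hs2 a b t, pdTL_r_rr hs1 hs2 d a t, pdTL_r_rr hs1 hs2 b d t,
            TL_rr π₁ π₂ p c lam t d, TL_rr π₁ π₂ p c lam t b, TL_rr π₁ π₂ p c lam t a]
      rw [S1, S2, ← Finset.sum_add_distrib]
      have E3 : ∀ t : Fin N,
          ((((∑ s, Yc z s * pd t (fun w => pd s (fun v => π₂ v a b) w) (Xc z))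
              + lam * pd t (fun w => π₁ w a b) (Xc z))
              * (π₂ (Xc z) t d + ee p t * ee p d * c (Xc z))
            + ((∑ s, Yc z s * pd t (fun w => pd s (fun v => π₂ v d a) w) (Xc z))
              + lam * pd t (fun w => π₁ w d a) (Xc z))
              * (π₂ (Xc z) t b + ee p t * ee p b * c (Xc z))
            + ((∑ s, Yc z s * pd t (fun w => pd s (fun v => π₂ v b d) w) (Xc z))
              + lam * pd t (fun w => π₁ w b d) (Xc z))
              * (π₂ (Xc z) t a + ee p t * ee p a * c (Xc z)))
          + (pd t (fun w => π₂ w a b) (Xc z)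
              * ((∑ s, Yc z s * pd s (fun w => π₂ w t d) (Xc z)) + lam * π₁ (Xc z) t d)
            + pd t (fun w => π₂ w d a) (Xc z)
              * ((∑ s, Yc z s * pd s (fun w => π₂ w t b) (Xc z)) + lam * π₁ (Xc z) t b)
            + pd t (fun w => π₂ w b d) (Xc z)
              * ((∑ s, Yc z s * pd s (fun w => π₂ w t a) (Xc z)) + lam * π₁ (Xc z) t a)))
          = (∑ s, Yc z s *
              ((pd t (fun w => pd s (fun v => π₂ v a b) w) (Xc z) * π₂ (Xc z) t d
                + pd t (fun v => π₂ v a b) (Xc z) * pd s (fun w => π₂ w t d) (Xc z))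
              + (pd t (fun w => pd s (fun v => π₂ v d a) w) (Xc z) * π₂ (Xc z) t b
                + pd t (fun v => π₂ v d a) (Xc z) * pd s (fun w => π₂ w t b) (Xc z))
              + (pd t (fun w => pd s (fun v => π₂ v b d) w) (Xc z) * π₂ (Xc z) t a
                + pd t (fun v => π₂ v b d) (Xc z) * pd s (fun w => π₂ w t a) (Xc z))))
            + lam * (pd t (fun w => π₁ w a b) (Xc z) * π₂ (Xc z) t d
                + pd t (fun w => π₂ w a b) (Xc z) * π₁ (Xc z) t d
              + (pd t (fun w => π₁ w d a) (Xc z) * π₂ (Xc z) t b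
                + pd t (fun w => π₂ w d a) (Xc z) * π₁ (Xc z) t b)
              + (pd t (fun w => π₁ w b d) (Xc z) * π₂ (Xc z) t a
                + pd t (fun w => π₂ w b d) (Xc z) * π₁ (Xc z) t a))
            + ee p t * (c (Xc z) *
              (ee p d * ((∑ s, Yc z s * pd t (fun w => pd s (fun v => π₂ v a b) w) (Xc z))
                + lam * pd t (fun w => π₁ w a b) (Xc z))
              + ee p b * ((∑ s, Yc z s * pd t (fun w => pd s (fun v => π₂ v d a) w) (Xc z))
                + lam * pd t (fun w => π₁ w d a) (Xc z))
              + ee p a * ((∑ s, Yc z s * pd t (fun w => pd s (fun v => π₂ v b d) w) (Xc z))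
                + lam * pd t (fun w => π₁ w b d) (Xc z)))) := by
        intro t
        have hsplit :
            (∑ s, Yc z s * pd t (fun w => pd s (fun v => π₂ v a b) w) (Xc z)) * π₂ (Xc z) t d
            + pd t (fun v => π₂ v a b) (Xc z)
              * (∑ s, Yc z s * pd s (fun w => π₂ w t d) (Xc z))
            + ((∑ s, Yc z s * pd t (fun w => pd s (fun v => π₂ v d a) w) (Xc z)) * π₂ (Xc z) t b
            + pd t (fun v => π₂ v d a) (Xc z)
              * (∑ s, Yc z s * pd s (fun w => π₂ w t b) (Xc z)))
            + ((∑ s, Yc z s * pd t (fun w => pd s (fun v => π₂ v b d) w) (Xc z)) * π₂ (Xc z) t a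
            + pd t (fun v => π₂ v b d) (Xc z)
              * (∑ s, Yc z s * pd s (fun w => π₂ w t a) (Xc z)))
            = ∑ s, Yc z s *
              ((pd t (fun w => pd s (fun v => π₂ v a b) w) (Xc z) * π₂ (Xc z) t d
                + pd t (fun v => π₂ v a b) (Xc z) * pd s (fun w => π₂ w t d) (Xc z))
              + (pd t (fun w => pd s (fun v => π₂ v d a) w) (Xc z) * π₂ (Xc z) t b
                + pd t (fun v => π₂ v d a) (Xc z) * pd s (fun w => π₂ w t b) (Xc z))
              + (pd t (fun w => pd s (fun v => π₂ v b d) w) (Xc z) * π₂ (Xc z) t a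
                + pd t (fun v => π₂ v b d) (Xc z) * pd s (fun w => π₂ w t a) (Xc z))) := by
          rw [Finset.sum_mul, Finset.sum_mul, Finset.sum_mul, Finset.mul_sum,
            Finset.mul_sum, Finset.mul_sum, ← Finset.sum_add_distrib,
            ← Finset.sum_add_distrib, ← Finset.sum_add_distrib, ← Finset.sum_add_distrib,
            ← Finset.sum_add_distrib]
          exact Finset.sum_congr rfl fun s _ => by ring
        rw [← hsplit]
        ring
      rw [Finset.sum_congr rfl fun t _ => E3 t, Finset.sum_add_distrib,
        Finset.sum_add_distrib]
      have hy : ∑ t : Fin N, (∑ s, Yc z s *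
              ((pd t (fun w => pd s (fun v => π₂ v a b) w) (Xc z) * π₂ (Xc z) t d
                + pd t (fun v => π₂ v a b) (Xc z) * pd s (fun w => π₂ w t d) (Xc z))
              + (pd t (fun w => pd s (fun v => π₂ v d a) w) (Xc z) * π₂ (Xc z) t b
                + pd t (fun v => π₂ v d a) (Xc z) * pd s (fun w => π₂ w t b) (Xc z))
              + (pd t (fun w => pd s (fun v => π₂ v b d) w) (Xc z) * π₂ (Xc z) t a
                + pd t (fun v => π₂ v b d) (Xc z) * pd s (fun w => π₂ w t a) (Xc z))))
          = 0 := by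
        rw [Finset.sum_comm]
        refine Finset.sum_eq_zero fun s _ => ?_
        have hIN : ∑ t : Fin N,
            ((pd t (fun w => pd s (fun v => π₂ v a b) w) (Xc z) * π₂ (Xc z) t d
                + pd t (fun v => π₂ v a b) (Xc z) * pd s (fun w => π₂ w t d) (Xc z))
              + (pd t (fun w => pd s (fun v => π₂ v d a) w) (Xc z) * π₂ (Xc z) t b
                + pd t (fun v => π₂ v d a) (Xc z) * pd s (fun w => π₂ w t b) (Xc z))
              + (pd t (fun w => pd s (fun v => π₂ v b d) w) (Xc z) * π₂ (Xc z) t a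
                + pd t (fun v => π₂ v b d) (Xc z) * pd s (fun w => π₂ w t a) (Xc z))) = 0 := by
          refine Eq.trans (Finset.sum_congr rfl fun t _ => ?_) (factF6 hs2 hπ₂ (Xc z) s a b d)
          rw [pd_pd_comm (hs2 a b), pd_pd_comm (hs2 d a), pd_pd_comm (hs2 b d)]
        rw [← Finset.mul_sum, hIN, mul_zero]
      have hlam : ∑ t : Fin N, (lam * (pd t (fun w => π₁ w a b) (Xc z) * π₂ (Xc z) t d
                + pd t (fun w => π₂ w a b) (Xc z) * π₁ (Xc z) t d
              + (pd t (fun w => π₁ w d a) (Xc z) * π₂ (Xc z) t b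
                + pd t (fun w => π₂ w d a) (Xc z) * π₁ (Xc z) t b)
              + (pd t (fun w => π₁ w b d) (Xc z) * π₂ (Xc z) t a
                + pd t (fun w => π₂ w b d) (Xc z) * π₁ (Xc z) t a))) = 0 := by
        rw [← Finset.mul_sum, factF2 hs1 hs2 hπ₁ hπ₂ hcomp (Xc z) a b d, mul_zero]
      rw [hy, hlam]
      have hQQ := factQQp (p := p) hs2 hp₂
      have E4 : ∀ t : Fin N, ee p t * (c (Xc z) *
              (ee p d * ((∑ s, Yc z s * pd t (fun w => pd s (fun v => π₂ v a b) w) (Xc z))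
                + lam * pd t (fun w => π₁ w a b) (Xc z))
              + ee p b * ((∑ s, Yc z s * pd t (fun w => pd s (fun v => π₂ v d a) w) (Xc z))
                + lam * pd t (fun w => π₁ w d a) (Xc z))
              + ee p a * ((∑ s, Yc z s * pd t (fun w => pd s (fun v => π₂ v b d) w) (Xc z))
                + lam * pd t (fun w => π₁ w b d) (Xc z))))
          = if t = p then (c (Xc z) *
              (ee p d * ((∑ s, Yc z s * pd t (fun w => pd s (fun v => π₂ v a b) w) (Xc z))
                + lam * pd t (fun w => π₁ w a b) (Xc z))
              + ee p b * ((∑ s, Yc z s * pd t (fun w => pd s (fun v => π₂ v d a) w) (Xc z))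
                + lam * pd t (fun w => π₁ w d a) (Xc z))
              + ee p a * ((∑ s, Yc z s * pd t (fun w => pd s (fun v => π₂ v b d) w) (Xc z))
                + lam * pd t (fun w => π₁ w b d) (Xc z)))) else 0 := by
        intro t
        by_cases ht : t = p
        · rw [if_pos ht, show ee p t = 1 from if_pos ht, one_mul]
        · rw [if_neg ht, show ee p t = 0 from if_neg ht, zero_mul]
      rw [Finset.sum_congr rfl fun t _ => E4 t, Finset.sum_ite_eq' Finset.univ p]
      simp [hQQ, hp₁]
    rcases i with a | a <;> rcases j with b | b <;> rcases k with d | d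
    · exact hlll a b d
    · exact hllr a b d
    · rw [hrot]; rw [hrot]; exact hllr d a b
    · exact hlrr a b d
    · rw [hrot]; exact hllr b d a
    · rw [hrot]; exact hlrr b d a
    · rw [hrot]; rw [hrot]; exact hlrr d a b
    · exact hrrr a b d

/-- tangent lift of a bi-Hamiltonian structure deformed by a Casimir,
`Π_{TM,λ,c(x)}`, is a Poisson tensor on `ℝ^{2N}`. -/
theorem stmt6 {N : ℕ} (hN : 1 ≤ N)
    (π₁ π₂ : (Fin N → ℝ) → Matrix (Fin N) (Fin N) ℝ)
    (hπ₁ : IsPoissonTensor π₁) (hπ₂ : IsPoissonTensor π₂)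
    (hcomp : IsPoissonTensor (fun x => π₁ x + π₂ x))
    (p : Fin N)
    (hp₁ : ∀ x i j, pd p (fun y => π₁ y i j) x = 0)
    (hp₂ : ∀ x i j, pd p (fun y => π₂ y i j) x = 0)
    (c : (Fin N → ℝ) → ℝ) (hc : IsCasimir π₂ c)
    (lam : ℝ) :
    IsPoissonTensor (fun z : (Fin N ⊕ Fin N) → ℝ =>
      Matrix.fromBlocks
        0
        (π₂ (Xc z) + c (Xc z) • Matrix.single p p (1 : ℝ))
        (π₂ (Xc z) - c (Xc z) • Matrix.single p p (1 : ℝ))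
        (∑ s, Yc z s • pdMat s π₂ (Xc z) + lam • π₁ (Xc z))) := by
  exact TL_poisson π₁ π₂ hπ₁ hπ₂ hcomp p hp₁ hp₂ c hc lam
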